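/- Let G be an edge-colored complete graph of order n ≥ 3 such that every vertex x has color degree δ^c(x) ≥ (n+1)/2. Then every vertex of G is contained in a properly colored cycle of length 3. -/
import Mathlib

/-- Every vertex of an edge-colored complete graph of order `n ≥ 3` with all color degrees
at least `(n+1)/2` lies on a properly colored cycle of length 3. -/
theorem stmt_10 {V C : Type*} [Fintype V] (c : Sym2 V → C)
    (hn : 3 ≤ Fintype.card V)
    (hdeg : ∀ x : V,
      Fintype.card V + 1 ≤ 2 * Set.ncard ((fun y => c s(x, y)) '' {y : V | y ≠ x})) :
    ∀ v : V, ∃ x y : V, v ≠ x ∧ v ≠ y ∧ x ≠ y ∧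
      c s(v, x) ≠ c s(x, y) ∧ c s(x, y) ≠ c s(y, v) ∧ c s(y, v) ≠ c s(v, x) := by
  classical
  intro v
  by_contra hcon
  push_neg at hcon
  set n := Fintype.card V with hncard
  set col : V → C := fun u => c s(v, u) with hcol
  set W : Finset V := Finset.univ.filter (fun u => u ≠ v) with hW
  have hWcard : W.card = n - 1 := by
    rw [hW, Finset.filter_ne', Finset.card_erase_of_mem (Finset.mem_univ v), Finset.card_univ]
  -- color degree as a Finset card
  have hdeg' : ∀ x : V, n + 1 ≤
      2 * ((Finset.univ.filter (fun y => y ≠ x)).image (fun y => c s(x, y))).card := by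
    intro x
    have h := hdeg x
    have e : ((fun y => c s(x, y)) '' {y : V | y ≠ x}) =
        ↑((Finset.univ.filter (fun y => y ≠ x)).image (fun y => c s(x, y))) := by
      ext k; simp
    rwa [e, Set.ncard_coe_finset] at h
  -- key structural fact from the absence of a PC triangle through v
  have key : ∀ x y : V, x ≠ v → y ≠ v → x ≠ y → col x ≠ col y →
      c s(x, y) = col x ∨ c s(x, y) = col y := by
    intro x y hxv hyv hxy hcolxy
    by_contra h
    push_neg at h
    have h1 : c s(v, x) ≠ c s(x, y) := fun he => h.1 he.symm
    have h2 : c s(x, y) ≠ c s(y, v) := by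
      intro he
      apply h.2
      rw [he]
      exact congrArg c (Sym2.eq_swap)
    have h3 := hcon x y (Ne.symm hxv) (Ne.symm hyv) hxy h1 h2
    apply hcolxy
    have : col y = c s(y, v) := congrArg c (Sym2.eq_swap)
    rw [this, h3]
  -- singleton-class vertices
  set S : Finset V := W.filter (fun x => ∀ u ∈ W, col u = col x → u = x) with hS
  have hSW : S ⊆ W := Finset.filter_subset _ _
  have hinjS : Set.InjOn col ↑S := by
    intro x hx y hy hxy
    have hyP := (Finset.mem_filter.1 hy).2
    exact hyP x (hSW hx) hxy
  set Q : Finset C := (W.image col) \ (S.image col) with hQ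
  have hSimg : S.image col ⊆ W.image col := Finset.image_subset_image hSW
  have himgsplit : W.image col = (S.image col) ∪ Q := by
    rw [hQ, Finset.union_sdiff_of_subset hSimg]
  have hSimgcard : (S.image col).card = S.card := Finset.card_image_of_injOn hinjS
  -- Inequality 1 : s + 2q ≤ n - 1
  have h1 : S.card + 2 * Q.card ≤ n - 1 := by
    have hsplit : W.card = ∑ k ∈ W.image col, (W.filter (fun u => col u = k)).card :=
      Finset.card_eq_sum_card_fiberwise (fun u hu => Finset.mem_image_of_mem col hu)
    have hdisj : Disjoint (S.image col) Q := Finset.disjoint_sdiff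
    have hsum : ∑ k ∈ W.image col, (W.filter (fun u => col u = k)).card =
        (∑ k ∈ S.image col, (W.filter (fun u => col u = k)).card) +
        (∑ k ∈ Q, (W.filter (fun u => col u = k)).card) := by
      rw [himgsplit, Finset.sum_union hdisj]
    have hb1 : ∀ k ∈ S.image col, 1 ≤ (W.filter (fun u => col u = k)).card := by
      intro k hk
      obtain ⟨u, huS, hu⟩ := Finset.mem_image.1 hk
      have : u ∈ W.filter (fun u => col u = k) := Finset.mem_filter.2 ⟨hSW huS, hu⟩
      exact Finset.card_pos.2 ⟨u, this⟩
    have hb2 : ∀ k ∈ Q, 2 ≤ (W.filter (fun u => col u = k)).card := by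
      intro k hk
      have hkW : k ∈ W.image col := (Finset.mem_sdiff.1 hk).1
      have hkS : k ∉ S.image col := (Finset.mem_sdiff.1 hk).2
      obtain ⟨u, huW, hu⟩ := Finset.mem_image.1 hkW
      have huS : u ∉ S := fun h => hkS (Finset.mem_image.2 ⟨u, h, hu⟩)
      have : ¬ (∀ w ∈ W, col w = col u → w = u) := by
        intro h
        exact huS (Finset.mem_filter.2 ⟨huW, h⟩)
      push_neg at this
      obtain ⟨w, hwW, hwcol, hwu⟩ := this
      have hu' : u ∈ W.filter (fun u => col u = k) := Finset.mem_filter.2 ⟨huW, hu⟩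
      have hw' : w ∈ W.filter (fun u => col u = k) :=
        Finset.mem_filter.2 ⟨hwW, by rw [hwcol, hu]⟩
      exact Finset.one_lt_card.2 ⟨w, hw', u, hu', hwu⟩
    have hge1 : (S.image col).card * 1 ≤
        ∑ k ∈ S.image col, (W.filter (fun u => col u = k)).card := by
      simpa using Finset.card_nsmul_le_sum _ _ _ hb1
    have hge2 : Q.card * 2 ≤ ∑ k ∈ Q, (W.filter (fun u => col u = k)).card := by
      simpa using Finset.card_nsmul_le_sum _ _ _ hb2
    have : S.card + 2 * Q.card ≤ W.card := by
      rw [hsplit, hsum]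
      have := hSimgcard
      omega
    omega
  -- the count of "received" singleton-class edges at x
  set f : V → ℕ := fun x => (S.filter (fun u => u ≠ x ∧ c s(x, u) = col u)).card with hf
  -- Inequality 2 : per-vertex color degree bound for singleton vertices
  have h2 : ∀ x ∈ S, n + 1 ≤ 2 * (1 + Q.card + f x) := by
    intro x hxS
    have hxW : x ∈ W := hSW hxS
    have hxv : x ≠ v := (Finset.mem_filter.1 hxW).2
    have hsing : ∀ u ∈ W, col u = col x → u = x := (Finset.mem_filter.1 hxS).2
    have hsubset : (Finset.univ.filter (fun y => y ≠ x)).image (fun y => c s(x, y)) ⊆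
        insert (col x) (Q ∪ (S.filter (fun u => u ≠ x ∧ c s(x, u) = col u)).image col) := by
      intro k hk
      obtain ⟨y, hy, hky⟩ := Finset.mem_image.1 hk
      have hyx : y ≠ x := (Finset.mem_filter.1 hy).2
      by_cases hyv : y = v
      · subst hyv
        apply Finset.mem_insert.2
        left
        rw [← hky]
        exact congrArg c (Sym2.eq_swap)
      · have hyW : y ∈ W := Finset.mem_filter.2 ⟨Finset.mem_univ y, hyv⟩
        have hcolne : col x ≠ col y := fun h => hyx (hsing y hyW h.symm)
        rcases key x y hxv hyv (Ne.symm hyx) hcolne with h | h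
        · exact Finset.mem_insert.2 (Or.inl (by rw [← hky, h]))
        · apply Finset.mem_insert.2
          right
          apply Finset.mem_union.2
          by_cases hyQ : col y ∈ Q
          · left; rw [← hky, h]; exact hyQ
          · right
            have hyimg : col y ∈ W.image col := Finset.mem_image_of_mem col hyW
            have hySimg : col y ∈ S.image col := by
              by_contra hc
              exact hyQ (Finset.mem_sdiff.2 ⟨hyimg, hc⟩)
            obtain ⟨u, huS, hu⟩ := Finset.mem_image.1 hySimg
            have hyu : y = u := (Finset.mem_filter.1 huS).2 y hyW hu.symm
            subst hyu
            apply Finset.mem_image.2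
            refine ⟨y, Finset.mem_filter.2 ⟨huS, hyx, ?_⟩, by rw [← hky, h]⟩
            rw [h]
    have hcard : ((Finset.univ.filter (fun y => y ≠ x)).image (fun y => c s(x, y))).card ≤
        1 + Q.card + (S.filter (fun u => u ≠ x ∧ c s(x, u) = col u)).card := by
      calc ((Finset.univ.filter (fun y => y ≠ x)).image (fun y => c s(x, y))).card
          ≤ (insert (col x)
              (Q ∪ (S.filter (fun u => u ≠ x ∧ c s(x, u) = col u)).image col)).card :=
            Finset.card_le_card hsubset
        _ ≤ 1 + (Q ∪ (S.filter (fun u => u ≠ x ∧ c s(x, u) = col u)).image col).card := by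
            have := Finset.card_insert_le (col x)
              (Q ∪ (S.filter (fun u => u ≠ x ∧ c s(x, u) = col u)).image col)
            omega
        _ ≤ 1 + (Q.card + ((S.filter (fun u => u ≠ x ∧ c s(x, u) = col u)).image col).card) := by
            have := Finset.card_union_le Q
              ((S.filter (fun u => u ≠ x ∧ c s(x, u) = col u)).image col)
            omega
        _ ≤ 1 + Q.card + (S.filter (fun u => u ≠ x ∧ c s(x, u) = col u)).card := by
            have := Finset.card_image_le
              (s := S.filter (fun u => u ≠ x ∧ c s(x, u) = col u)) (f := col)
            omega
    have := hdeg' x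
    show n + 1 ≤ 2 * (1 + Q.card + (S.filter (fun u => u ≠ x ∧ c s(x, u) = col u)).card)
    omega
  -- double counting the received edges inside S
  set P : Finset (V × V) := S.offDiag.filter (fun p => c s(p.1, p.2) = col p.2) with hP
  have hPsum : ∑ x ∈ S, f x = P.card := by
    have hfib : ∀ p ∈ P, p.1 ∈ S := by
      intro p hp
      exact (Finset.mem_offDiag.1 (Finset.mem_filter.1 hp).1).1
    rw [Finset.card_eq_sum_card_fiberwise hfib]
    apply Finset.sum_congr rfl
    intro x hx
    apply Finset.card_bij (fun u _ => (x, u))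
    · intro u hu
      have h' := Finset.mem_filter.1 hu
      refine Finset.mem_filter.2 ⟨Finset.mem_filter.2 ⟨?_, h'.2.2⟩, rfl⟩
      exact Finset.mem_offDiag.2 ⟨hx, h'.1, Ne.symm h'.2.1⟩
    · intro u₁ h₁ u₂ h₂ he
      exact congrArg Prod.snd he
    · intro p hp
      have h' := Finset.mem_filter.1 hp
      have h'' := Finset.mem_filter.1 h'.1
      have hod := Finset.mem_offDiag.1 h''.1
      have hp1 : p.1 = x := h'.2
      refine ⟨p.2, Finset.mem_filter.2 ⟨hod.2.1, ?_, ?_⟩, ?_⟩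
      · rw [← hp1]; exact Ne.symm hod.2.2
      · rw [← hp1]; exact h''.2
      · rw [← hp1]
  have hPP : 2 * P.card + S.card ≤ S.card * S.card := by
    have hsub : P ⊆ S.offDiag := Finset.filter_subset _ _
    have hmapsub : P.map ⟨Prod.swap, Prod.swap_injective⟩ ⊆ S.offDiag := by
      intro p hp
      obtain ⟨q, hq, hqp⟩ := Finset.mem_map.1 hp
      have hod := Finset.mem_offDiag.1 (hsub hq)
      rw [← hqp]
      exact Finset.mem_offDiag.2 ⟨hod.2.1, hod.1, Ne.symm hod.2.2⟩
    have hdisj : Disjoint P (P.map ⟨Prod.swap, Prod.swap_injective⟩) := by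
      rw [Finset.disjoint_left]
      intro p hp hp'
      obtain ⟨q, hq, hqp⟩ := Finset.mem_map.1 hp'
      have hpP := Finset.mem_filter.1 hp
      have hqP := Finset.mem_filter.1 hq
      have hod := Finset.mem_offDiag.1 hpP.1
      -- p = q.swap, so q = (p.2, p.1)
      have hq2 : q.2 = p.1 := by rw [← hqp]; rfl
      have hq1 : q.1 = p.2 := by rw [← hqp]; rfl
      have e1 : c s(p.1, p.2) = col p.2 := hpP.2
      have e2 : c s(p.2, p.1) = col p.1 := by
        have := hqP.2
        rwa [hq1, hq2] at this
      have : col p.1 = col p.2 := by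
        rw [← e1, ← e2]
        exact congrArg c (Sym2.eq_swap)
      have hsing := (Finset.mem_filter.1 hod.2.1).2
      exact hod.2.2 (hsing p.1 (hSW hod.1) this)
    have hcu : (P ∪ P.map ⟨Prod.swap, Prod.swap_injective⟩).card ≤ S.offDiag.card :=
      Finset.card_le_card (Finset.union_subset hsub hmapsub)
    rw [Finset.card_union_of_disjoint hdisj, Finset.card_map, Finset.offDiag_card] at hcu
    have hle : S.card ≤ S.card * S.card := by
      rcases Nat.eq_zero_or_pos S.card with h | h
      · simp [h]
      · exact Nat.le_mul_of_pos_left _ h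
    omega
  -- s ≥ 1 (in fact ≥ 2)
  have hd : n + 1 ≤ 2 * (S.card + Q.card) := by
    have := hdeg' v
    have himg : (Finset.univ.filter (fun y => y ≠ v)).image (fun y => c s(v, y)) =
        W.image col := rfl
    rw [himg, himgsplit, Finset.card_union_of_disjoint Finset.disjoint_sdiff, hSimgcard,
      ← hQ] at this
    omega
  have hspos : 1 ≤ S.card := by omega
  -- sum inequality
  have hsum2 : S.card * (n + 1) ≤ S.card * (2 + 2 * Q.card) + 2 * P.card := by
    calc S.card * (n + 1) = ∑ _x ∈ S, (n + 1) := by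
          rw [Finset.sum_const, smul_eq_mul, mul_comm]
      _ ≤ ∑ x ∈ S, 2 * (1 + Q.card + f x) := Finset.sum_le_sum h2
      _ = ∑ x ∈ S, (2 * (1 + Q.card) + 2 * f x) := by
          apply Finset.sum_congr rfl
          intro x hx
          ring
      _ = S.card * (2 + 2 * Q.card) + 2 * (∑ x ∈ S, f x) := by
          rw [Finset.sum_add_distrib, Finset.sum_const, smul_eq_mul, Finset.mul_sum]
          ring
      _ = S.card * (2 + 2 * Q.card) + 2 * P.card := by rw [hPsum]
  have hfinal : S.card * (n + 2) ≤ S.card * (S.card + 2 + 2 * Q.card) := by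
    have e1 : S.card * (n + 2) = S.card * (n + 1) + S.card := by ring
    have e2 : S.card * (S.card + 2 + 2 * Q.card) =
        S.card * (2 + 2 * Q.card) + S.card * S.card := by ring
    omega
  have hfinal2 : n + 2 ≤ S.card + 2 + 2 * Q.card :=
    Nat.le_of_mul_le_mul_left (by
      calc S.card * (n + 2) ≤ S.card * (S.card + 2 + 2 * Q.card) := hfinal) hspos
  omega
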